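/- Prevision bound for the triple conjunction: for events E1, H1, E2, H2, E3, H3 with P(Hi) > 0 for i = 1, 2, 3, the prevision x123 of the triple conjunction C3 satisfies x123 ≤ min(x1, x2, x3), where xi := P(Ei|Hi). -/

import Mathlib

open MeasureTheory Set
open scoped Classical

noncomputable section

variable {Ω : Type*} [MeasurableSpace Ω]

/-- Indicator (with values in `ℝ`) of a set. -/
def ind (A : Set Ω) : Ω → ℝ := A.indicator 1

/-- Conditional probability `P(A|H) = P(A ∩ H)/P(H)`. -/
def condProb (P : Measure Ω) (A H : Set Ω) : ℝ :=
  (P (A ∩ H)).toReal / (P H).toReal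

/-- The (indicator of the) conditional event `A|H`,
`⟦A|H⟧ = 1_{A∩H} + P(A|H)·1_{Hᶜ}`. -/
def condEvent (P : Measure Ω) (A H : Set Ω) : Ω → ℝ :=
  fun ω => ind (A ∩ H) ω + condProb P A H * ind Hᶜ ω

/-- The prevision `z` of the conjunction `(A|H) ∧ (B|K)`:
`z = E[min(⟦A|H⟧, ⟦B|K⟧)·1_{H∪K}]/P(H∪K)`. -/
def conjPrev (P : Measure Ω) (A H B K : Set Ω) : ℝ :=
  (∫ ω, min (condEvent P A H ω) (condEvent P B K ω) * ind (H ∪ K) ω ∂P) /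
    (P (H ∪ K)).toReal

/-- The conjunction `⟦(A|H) ∧ (B|K)⟧ = min(⟦A|H⟧, ⟦B|K⟧)·1_{H∪K} + z·1_{(H∪K)ᶜ}`. -/
def conjCE (P : Measure Ω) (A H B K : Set Ω) : Ω → ℝ :=
  fun ω => min (condEvent P A H ω) (condEvent P B K ω) * ind (H ∪ K) ω
    + conjPrev P A H B K * ind (H ∪ K)ᶜ ω

/-- The iterated conditional `⟦(B|K)|(A|H)⟧ = ⟦(A|H)∧(B|K)⟧ + μ·(1 − ⟦A|H⟧)`,
with `μ = z / P(A|H)`. -/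
def iterCond (P : Measure Ω) (A H B K : Set Ω) : Ω → ℝ :=
  fun ω => conjCE P A H B K ω +
    (conjPrev P A H B K / condProb P A H) * (1 - condEvent P A H ω)

/-- Goodman–Nguyen logical implication between conditional events:
`A|H ⊑ B|K` iff `A∩H ⊆ B∩K` and `Bᶜ∩K ⊆ Aᶜ∩H`. -/
def GNle (A H B K : Set Ω) : Prop := A ∩ H ⊆ B ∩ K ∧ Bᶜ ∩ K ⊆ Aᶜ ∩ H

/-- Triple conjunction `⟦(E1|H1)∧(E2|H2)∧(E3|H3)⟧`, defined piecewise, except that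
on `H1ᶜ∩H2ᶜ∩H3ᶜ` it is set to `0` (it is irrelevant there for computing `x123`). -/
def c3base (P : Measure Ω) (E1 H1 E2 H2 E3 H3 : Set Ω) : Ω → ℝ := fun ω =>
  if ω ∈ E1 ∩ H1 ∩ (E2 ∩ H2) ∩ (E3 ∩ H3) then 1
  else if ω ∈ (E1ᶜ ∩ H1) ∪ (E2ᶜ ∩ H2) ∪ (E3ᶜ ∩ H3) then 0
  else if ω ∈ H1ᶜ ∩ (E2 ∩ H2) ∩ (E3 ∩ H3) then condProb P E1 H1
  else if ω ∈ H2ᶜ ∩ (E1 ∩ H1) ∩ (E3 ∩ H3) then condProb P E2 H2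
  else if ω ∈ H3ᶜ ∩ (E1 ∩ H1) ∩ (E2 ∩ H2) then condProb P E3 H3
  else if ω ∈ H1ᶜ ∩ H2ᶜ ∩ (E3 ∩ H3) then conjPrev P E1 H1 E2 H2
  else if ω ∈ H1ᶜ ∩ H3ᶜ ∩ (E2 ∩ H2) then conjPrev P E1 H1 E3 H3
  else if ω ∈ H2ᶜ ∩ H3ᶜ ∩ (E1 ∩ H1) then conjPrev P E2 H2 E3 H3
  else 0

/-- The prevision `x123 = E[C3·1_{H1∪H2∪H3}]/P(H1∪H2∪H3)` of the triple conjunction. -/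
def x123 (P : Measure Ω) (E1 H1 E2 H2 E3 H3 : Set Ω) : ℝ :=
  (∫ ω, c3base P E1 H1 E2 H2 E3 H3 ω * ind (H1 ∪ H2 ∪ H3) ω ∂P) /
    (P (H1 ∪ H2 ∪ H3)).toReal

/-- The triple conjunction `C3 = ⟦(E1|H1)∧(E2|H2)∧(E3|H3)⟧`, equal to `x123` on
`H1ᶜ∩H2ᶜ∩H3ᶜ` and given piecewise by `c3base` elsewhere. -/
def c3 (P : Measure Ω) (E1 H1 E2 H2 E3 H3 : Set Ω) : Ω → ℝ := fun ω =>
  if ω ∈ H1ᶜ ∩ H2ᶜ ∩ H3ᶜ then x123 P E1 H1 E2 H2 E3 H3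
  else c3base P E1 H1 E2 H2 E3 H3 ω

/-- The iterated conditional `⟦(E3|H3)|((E1|H1)∧(E2|H2))⟧ = C3 + μ·(1 − C12)`,
where `μ = x123/x12` and `C12 = ⟦(E1|H1)∧(E2|H2)⟧`. -/
def iter3 (P : Measure Ω) (E1 H1 E2 H2 E3 H3 : Set Ω) : Ω → ℝ := fun ω =>
  c3 P E1 H1 E2 H2 E3 H3 ω +
    (x123 P E1 H1 E2 H2 E3 H3 / conjPrev P E1 H1 E2 H2) *
      (1 - conjCE P E1 H1 E2 H2 ω)

set_option linter.unusedSectionVars false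
set_option maxHeartbeats 1000000

section Aux

lemma ind_nonneg (S : Set Ω) (ω : Ω) : 0 ≤ ind S ω :=
  Set.indicator_nonneg (fun _ _ => zero_le_one) ω

lemma ind_le_one (S : Set Ω) (ω : Ω) : ind S ω ≤ 1 := by
  by_cases h : ω ∈ S <;> simp [ind, h]

lemma ind_mem {S : Set Ω} {ω : Ω} (h : ω ∈ S) : ind S ω = 1 := by simp [ind, h]

lemma ind_not_mem {S : Set Ω} {ω : Ω} (h : ω ∉ S) : ind S ω = 0 := by simp [ind, h]

lemma measurable_ind {S : Set Ω} (hS : MeasurableSet S) : Measurable (ind S) :=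
  measurable_one.indicator hS

lemma integrable_ind (P : Measure Ω) [IsProbabilityMeasure P]
    {S : Set Ω} (hS : MeasurableSet S) : Integrable (ind S) P :=
  (integrable_const (1:ℝ)).indicator hS

lemma integral_ind (P : Measure Ω) [IsProbabilityMeasure P]
    {S : Set Ω} (hS : MeasurableSet S) : ∫ ω, ind S ω ∂P = (P S).toReal := by
  rw [ind]; exact integral_indicator_one hS

lemma condProb_nonneg (P : Measure Ω) (A H : Set Ω) : 0 ≤ condProb P A H :=
  div_nonneg ENNReal.toReal_nonneg ENNReal.toReal_nonneg

lemma condProb_le_one (P : Measure Ω) [IsProbabilityMeasure P] (A H : Set Ω) :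
    condProb P A H ≤ 1 :=
  div_le_one_of_le₀ (ENNReal.toReal_mono (measure_ne_top P H)
    (measure_mono Set.inter_subset_right)) ENNReal.toReal_nonneg

lemma condEvent_nonneg (P : Measure Ω) (A H : Set Ω) (ω : Ω) :
    0 ≤ condEvent P A H ω :=
  add_nonneg (ind_nonneg _ _) (mul_nonneg (condProb_nonneg _ _ _) (ind_nonneg _ _))

lemma condEvent_le_one (P : Measure Ω) [IsProbabilityMeasure P] (A H : Set Ω) (ω : Ω) :
    condEvent P A H ω ≤ 1 := by
  by_cases h : ω ∈ H
  · have : ω ∉ Hᶜ := by simp [h]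
    simp only [condEvent, ind_not_mem this, mul_zero, add_zero]
    exact ind_le_one _ _
  · have hA : ω ∉ A ∩ H := fun hc => h hc.2
    simp only [condEvent, ind_not_mem hA, ind_mem (Set.mem_compl h), mul_one, zero_add]
    exact condProb_le_one P A H

lemma condEvent_of_mem (P : Measure Ω) {A H : Set Ω} {ω : Ω} (h : ω ∈ A ∩ H) :
    condEvent P A H ω = 1 := by
  have : ω ∉ Hᶜ := by simp [h.2]
  simp [condEvent, ind_mem h, ind_not_mem this]

lemma condEvent_of_not_mem (P : Measure Ω) {A H : Set Ω} {ω : Ω} (h : ω ∉ H) :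
    condEvent P A H ω = condProb P A H := by
  have hA : ω ∉ A ∩ H := fun hc => h hc.2
  simp [condEvent, ind_not_mem hA, ind_mem (Set.mem_compl h)]

lemma measurable_condEvent (P : Measure Ω) {A H : Set Ω}
    (hA : MeasurableSet A) (hH : MeasurableSet H) :
    Measurable (condEvent P A H) :=
  (measurable_ind (hA.inter hH)).add ((measurable_ind hH.compl).const_mul _)

lemma integrable_condEvent_mul_ind (P : Measure Ω) [IsProbabilityMeasure P]
    {A H U : Set Ω} (hA : MeasurableSet A) (hH : MeasurableSet H) (hU : MeasurableSet U) :
    Integrable (fun ω => condEvent P A H ω * ind U ω) P := by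
  refine Integrable.mono' (integrable_const (1:ℝ))
    (((measurable_condEvent P hA hH).mul (measurable_ind hU)).aestronglyMeasurable) ?_
  filter_upwards with ω
  rw [Real.norm_eq_abs, abs_of_nonneg (mul_nonneg (condEvent_nonneg _ _ _ _) (ind_nonneg _ _))]
  exact mul_le_one₀ (condEvent_le_one _ _ _ _) (ind_nonneg _ _) (ind_le_one _ _)

/-- Key computation: if `H ⊆ U` then `∫ ⟦A|H⟧·1_U = P(A|H)·P(U)`. -/
lemma integral_condEvent_mul_ind (P : Measure Ω) [IsProbabilityMeasure P]
    {A H U : Set Ω} (hA : MeasurableSet A) (hH : MeasurableSet H) (hU : MeasurableSet U)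
    (hH0 : P H ≠ 0) (hHU : H ⊆ U) :
    ∫ ω, condEvent P A H ω * ind U ω ∂P = condProb P A H * (P U).toReal := by
  have hpt : ∀ ω, condEvent P A H ω * ind U ω
      = ind (A ∩ H) ω + condProb P A H * ind (Hᶜ ∩ U) ω := by
    intro ω
    by_cases hUω : ω ∈ U
    · rw [ind_mem hUω, mul_one, condEvent]
      by_cases hHω : ω ∈ H
      · have h1 : ω ∉ Hᶜ := by simp [hHω]
        have h2 : ω ∉ Hᶜ ∩ U := fun hc => h1 hc.1
        simp [ind_not_mem h1, ind_not_mem h2]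
      · have h1 : ω ∈ Hᶜ := hHω
        simp [ind_mem h1, ind_mem (Set.mem_inter h1 hUω)]
    · have h0 : ω ∉ H := fun hc => hUω (hHU hc)
      have h1 : ω ∉ A ∩ H := fun hc => h0 hc.2
      have h2 : ω ∉ Hᶜ ∩ U := fun hc => hUω hc.2
      simp [ind_not_mem hUω, ind_not_mem h1, ind_not_mem h2]
  simp only [hpt]
  rw [integral_add (integrable_ind P (hA.inter hH))
      ((integrable_ind P (hH.compl.inter hU)).const_mul _),
    integral_const_mul _ _, integral_ind P (hA.inter hH), integral_ind P (hH.compl.inter hU)]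
  have hfin : P H ≠ ⊤ := measure_ne_top P H
  have hHr : (P H).toReal ≠ 0 := ENNReal.toReal_ne_zero.2 ⟨hH0, hfin⟩
  have h1 : (P (A ∩ H)).toReal = condProb P A H * (P H).toReal := by
    rw [condProb, div_mul_cancel₀ _ hHr]
  have h2 : (P U).toReal = (P H).toReal + (P (Hᶜ ∩ U)).toReal := by
    rw [← ENNReal.toReal_add hfin (measure_ne_top _ _)]
    congr 1
    have hsplit := measure_inter_add_diff (μ := P) U hH
    have e1 : U ∩ H = H := Set.inter_eq_right.2 hHU
    have e2 : U \ H = Hᶜ ∩ U := by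
      ext ω; simp [Set.mem_diff, Set.mem_inter_iff, and_comm]
    rw [e1, e2] at hsplit
    exact hsplit.symm
  rw [h1, h2, mul_add]

lemma integrable_min_mul_ind (P : Measure Ω) [IsProbabilityMeasure P]
    {A H B K : Set Ω} (hA : MeasurableSet A) (hH : MeasurableSet H)
    (hB : MeasurableSet B) (hK : MeasurableSet K) :
    Integrable (fun ω => min (condEvent P A H ω) (condEvent P B K ω) * ind (H ∪ K) ω) P := by
  refine Integrable.mono' (integrable_const (1:ℝ))
    ((((measurable_condEvent P hA hH).min (measurable_condEvent P hB hK)).mul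
      (measurable_ind (hH.union hK))).aestronglyMeasurable) ?_
  filter_upwards with ω
  have h0 : 0 ≤ min (condEvent P A H ω) (condEvent P B K ω) :=
    le_min (condEvent_nonneg _ _ _ _) (condEvent_nonneg _ _ _ _)
  rw [Real.norm_eq_abs, abs_of_nonneg (mul_nonneg h0 (ind_nonneg _ _))]
  exact mul_le_one₀ ((min_le_left _ _).trans (condEvent_le_one _ _ _ _))
    (ind_nonneg _ _) (ind_le_one _ _)

lemma conjPrev_nonneg (P : Measure Ω) (A H B K : Set Ω) : 0 ≤ conjPrev P A H B K := by
  apply div_nonneg _ ENNReal.toReal_nonneg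
  apply integral_nonneg
  intro ω
  exact mul_nonneg (le_min (condEvent_nonneg _ _ _ _) (condEvent_nonneg _ _ _ _)) (ind_nonneg _ _)

lemma conjPrev_le_left (P : Measure Ω) [IsProbabilityMeasure P]
    {A H B K : Set Ω} (hA : MeasurableSet A) (hH : MeasurableSet H)
    (hB : MeasurableSet B) (hK : MeasurableSet K) (hH0 : 0 < P H) :
    conjPrev P A H B K ≤ condProb P A H := by
  have hU0 : P (H ∪ K) ≠ 0 := fun hc =>
    hH0.ne' (le_antisymm (le_trans (measure_mono Set.subset_union_left) hc.le) zero_le)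
  have hD : 0 < (P (H ∪ K)).toReal := ENNReal.toReal_pos hU0 (measure_ne_top _ _)
  rw [conjPrev, div_le_iff₀ hD]
  calc ∫ ω, min (condEvent P A H ω) (condEvent P B K ω) * ind (H ∪ K) ω ∂P
      ≤ ∫ ω, condEvent P A H ω * ind (H ∪ K) ω ∂P := by
        refine integral_mono (integrable_min_mul_ind P hA hH hB hK)
          (integrable_condEvent_mul_ind P hA hH (hH.union hK)) fun ω => ?_
        exact mul_le_mul_of_nonneg_right (min_le_left _ _) (ind_nonneg _ _)
    _ = condProb P A H * (P (H ∪ K)).toReal :=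
        integral_condEvent_mul_ind P hA hH (hH.union hK) hH0.ne' Set.subset_union_left

lemma conjPrev_le_right (P : Measure Ω) [IsProbabilityMeasure P]
    {A H B K : Set Ω} (hA : MeasurableSet A) (hH : MeasurableSet H)
    (hB : MeasurableSet B) (hK : MeasurableSet K) (hH0 : 0 < P H) (hK0 : 0 < P K) :
    conjPrev P A H B K ≤ condProb P B K := by
  have hU0 : P (H ∪ K) ≠ 0 := fun hc =>
    hH0.ne' (le_antisymm (le_trans (measure_mono Set.subset_union_left) hc.le) zero_le)
  have hD : 0 < (P (H ∪ K)).toReal := ENNReal.toReal_pos hU0 (measure_ne_top _ _)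
  rw [conjPrev, div_le_iff₀ hD]
  calc ∫ ω, min (condEvent P A H ω) (condEvent P B K ω) * ind (H ∪ K) ω ∂P
      ≤ ∫ ω, condEvent P B K ω * ind (H ∪ K) ω ∂P := by
        refine integral_mono (integrable_min_mul_ind P hA hH hB hK)
          (integrable_condEvent_mul_ind P hB hK (hH.union hK)) fun ω => ?_
        exact mul_le_mul_of_nonneg_right (min_le_right _ _) (ind_nonneg _ _)
    _ = condProb P B K * (P (H ∪ K)).toReal :=
        integral_condEvent_mul_ind P hB hK (hH.union hK) hK0.ne' Set.subset_union_right

end Aux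
section Main

lemma measurable_c3base (P : Measure Ω) {E1 H1 E2 H2 E3 H3 : Set Ω}
    (hE1 : MeasurableSet E1) (hH1 : MeasurableSet H1)
    (hE2 : MeasurableSet E2) (hH2 : MeasurableSet H2)
    (hE3 : MeasurableSet E3) (hH3 : MeasurableSet H3) :
    Measurable (c3base P E1 H1 E2 H2 E3 H3) := by
  unfold c3base
  refine Measurable.ite ((hE1.inter hH1).inter (hE2.inter hH2) |>.inter (hE3.inter hH3))
    measurable_const ?_
  refine Measurable.ite (((hE1.compl.inter hH1).union (hE2.compl.inter hH2)).union
    (hE3.compl.inter hH3)) measurable_const ?_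
  refine Measurable.ite ((hH1.compl.inter (hE2.inter hH2)).inter (hE3.inter hH3))
    measurable_const ?_
  refine Measurable.ite ((hH2.compl.inter (hE1.inter hH1)).inter (hE3.inter hH3))
    measurable_const ?_
  refine Measurable.ite ((hH3.compl.inter (hE1.inter hH1)).inter (hE2.inter hH2))
    measurable_const ?_
  refine Measurable.ite ((hH1.compl.inter hH2.compl).inter (hE3.inter hH3))
    measurable_const ?_
  refine Measurable.ite ((hH1.compl.inter hH3.compl).inter (hE2.inter hH2))
    measurable_const ?_
  exact Measurable.ite ((hH2.compl.inter hH3.compl).inter (hE1.inter hH1))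
    measurable_const measurable_const

lemma c3base_nonneg (P : Measure Ω) (E1 H1 E2 H2 E3 H3 : Set Ω) (ω : Ω) :
    0 ≤ c3base P E1 H1 E2 H2 E3 H3 ω := by
  unfold c3base
  split_ifs <;>
    first
      | exact zero_le_one
      | exact le_refl 0
      | exact condProb_nonneg _ _ _
      | exact conjPrev_nonneg _ _ _ _ _

lemma c3base_le_one (P : Measure Ω) [IsProbabilityMeasure P] {E1 H1 E2 H2 E3 H3 : Set Ω}
    (hE1 : MeasurableSet E1) (hH1 : MeasurableSet H1)
    (hE2 : MeasurableSet E2) (hH2 : MeasurableSet H2)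
    (hE3 : MeasurableSet E3) (hH3 : MeasurableSet H3)
    (h1 : 0 < P H1) (h2 : 0 < P H2) (ω : Ω) :
    c3base P E1 H1 E2 H2 E3 H3 ω ≤ 1 := by
  unfold c3base
  split_ifs <;>
    first
      | exact le_refl 1
      | exact zero_le_one
      | exact condProb_le_one _ _ _
      | exact (conjPrev_le_left P hE1 hH1 hE2 hH2 h1).trans (condProb_le_one _ _ _)
      | exact (conjPrev_le_left P hE1 hH1 hE3 hH3 h1).trans (condProb_le_one _ _ _)
      | exact (conjPrev_le_left P hE2 hH2 hE3 hH3 h2).trans (condProb_le_one _ _ _)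

lemma integrable_c3base_mul_ind (P : Measure Ω) [IsProbabilityMeasure P]
    {E1 H1 E2 H2 E3 H3 : Set Ω}
    (hE1 : MeasurableSet E1) (hH1 : MeasurableSet H1)
    (hE2 : MeasurableSet E2) (hH2 : MeasurableSet H2)
    (hE3 : MeasurableSet E3) (hH3 : MeasurableSet H3)
    (h1 : 0 < P H1) (h2 : 0 < P H2) :
    Integrable (fun ω => c3base P E1 H1 E2 H2 E3 H3 ω * ind (H1 ∪ H2 ∪ H3) ω) P := by
  refine Integrable.mono' (integrable_const (1:ℝ))
    (((measurable_c3base P hE1 hH1 hE2 hH2 hE3 hH3).mul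
      (measurable_ind ((hH1.union hH2).union hH3))).aestronglyMeasurable) ?_
  filter_upwards with ω
  rw [Real.norm_eq_abs,
    abs_of_nonneg (mul_nonneg (c3base_nonneg _ _ _ _ _ _ _ _) (ind_nonneg _ _))]
  exact mul_le_one₀ (c3base_le_one P hE1 hH1 hE2 hH2 hE3 hH3 h1 h2 ω)
    (ind_nonneg _ _) (ind_le_one _ _)

end Main
section Pointwise

variable (P : Measure Ω) [IsProbabilityMeasure P] {E1 H1 E2 H2 E3 H3 : Set Ω}

lemma c3base_le_cond1
    (hE1 : MeasurableSet E1) (hH1 : MeasurableSet H1)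
    (hE2 : MeasurableSet E2) (hH2 : MeasurableSet H2)
    (hE3 : MeasurableSet E3) (hH3 : MeasurableSet H3)
    (h1 : 0 < P H1) (h2 : 0 < P H2) (h3 : 0 < P H3) (ω : Ω) :
    c3base P E1 H1 E2 H2 E3 H3 ω * ind (H1 ∪ H2 ∪ H3) ω ≤
      condEvent P E1 H1 ω * ind (H1 ∪ H2 ∪ H3) ω := by
  by_cases hU : ω ∈ H1 ∪ H2 ∪ H3
  · rw [ind_mem hU, mul_one, mul_one]
    unfold c3base
    split_ifs with hb1 hb2 hb3 hb4 hb5 hb6 hb7 hb8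
    · exact (condEvent_of_mem P hb1.1.1).ge
    · exact condEvent_nonneg _ _ _ _
    · exact (condEvent_of_not_mem P hb3.1.1).ge
    · rw [condEvent_of_mem P hb4.1.2]; exact condProb_le_one P E2 H2
    · rw [condEvent_of_mem P hb5.1.2]; exact condProb_le_one P E3 H3
    · rw [condEvent_of_not_mem P hb6.1.1]; exact conjPrev_le_left P hE1 hH1 hE2 hH2 h1
    · rw [condEvent_of_not_mem P hb7.1.1]; exact conjPrev_le_left P hE1 hH1 hE3 hH3 h1
    · rw [condEvent_of_mem P hb8.2]
      exact (conjPrev_le_left P hE2 hH2 hE3 hH3 h2).trans (condProb_le_one P E2 H2)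
    · exact condEvent_nonneg _ _ _ _
  · rw [ind_not_mem hU, mul_zero, mul_zero]

lemma c3base_le_cond2
    (hE1 : MeasurableSet E1) (hH1 : MeasurableSet H1)
    (hE2 : MeasurableSet E2) (hH2 : MeasurableSet H2)
    (hE3 : MeasurableSet E3) (hH3 : MeasurableSet H3)
    (h1 : 0 < P H1) (h2 : 0 < P H2) (h3 : 0 < P H3) (ω : Ω) :
    c3base P E1 H1 E2 H2 E3 H3 ω * ind (H1 ∪ H2 ∪ H3) ω ≤
      condEvent P E2 H2 ω * ind (H1 ∪ H2 ∪ H3) ω := by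
  by_cases hU : ω ∈ H1 ∪ H2 ∪ H3
  · rw [ind_mem hU, mul_one, mul_one]
    unfold c3base
    split_ifs with hb1 hb2 hb3 hb4 hb5 hb6 hb7 hb8
    · exact (condEvent_of_mem P hb1.1.2).ge
    · exact condEvent_nonneg _ _ _ _
    · rw [condEvent_of_mem P hb3.1.2]; exact condProb_le_one P E1 H1
    · exact (condEvent_of_not_mem P hb4.1.1).ge
    · rw [condEvent_of_mem P hb5.2]; exact condProb_le_one P E3 H3
    · rw [condEvent_of_not_mem P hb6.1.2]
      exact conjPrev_le_right P hE1 hH1 hE2 hH2 h1 h2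
    · rw [condEvent_of_mem P hb7.2]
      exact (conjPrev_le_left P hE1 hH1 hE3 hH3 h1).trans (condProb_le_one P E1 H1)
    · rw [condEvent_of_not_mem P hb8.1.1]; exact conjPrev_le_left P hE2 hH2 hE3 hH3 h2
    · exact condEvent_nonneg _ _ _ _
  · rw [ind_not_mem hU, mul_zero, mul_zero]

lemma c3base_le_cond3
    (hE1 : MeasurableSet E1) (hH1 : MeasurableSet H1)
    (hE2 : MeasurableSet E2) (hH2 : MeasurableSet H2)
    (hE3 : MeasurableSet E3) (hH3 : MeasurableSet H3)
    (h1 : 0 < P H1) (h2 : 0 < P H2) (h3 : 0 < P H3) (ω : Ω) :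
    c3base P E1 H1 E2 H2 E3 H3 ω * ind (H1 ∪ H2 ∪ H3) ω ≤
      condEvent P E3 H3 ω * ind (H1 ∪ H2 ∪ H3) ω := by
  by_cases hU : ω ∈ H1 ∪ H2 ∪ H3
  · rw [ind_mem hU, mul_one, mul_one]
    unfold c3base
    split_ifs with hb1 hb2 hb3 hb4 hb5 hb6 hb7 hb8
    · exact (condEvent_of_mem P hb1.2).ge
    · exact condEvent_nonneg _ _ _ _
    · rw [condEvent_of_mem P hb3.2]; exact condProb_le_one P E1 H1
    · rw [condEvent_of_mem P hb4.2]; exact condProb_le_one P E2 H2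
    · exact (condEvent_of_not_mem P hb5.1.1).ge
    · rw [condEvent_of_mem P hb6.2]
      exact (conjPrev_le_left P hE1 hH1 hE2 hH2 h1).trans (condProb_le_one P E1 H1)
    · rw [condEvent_of_not_mem P hb7.1.2]
      exact conjPrev_le_right P hE1 hH1 hE3 hH3 h1 h3
    · rw [condEvent_of_not_mem P hb8.1.2]
      exact conjPrev_le_right P hE2 hH2 hE3 hH3 h2 h3
    · exact condEvent_nonneg _ _ _ _
  · rw [ind_not_mem hU, mul_zero, mul_zero]

end Pointwise
/-- Prevision bound for the triple conjunction:
`x123 ≤ min(x1, x2, x3)` where `xi = P(Ei|Hi)`. -/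
theorem triple_conj_prevision_le (P : Measure Ω) [IsProbabilityMeasure P]
    (E1 H1 E2 H2 E3 H3 : Set Ω)
    (hE1 : MeasurableSet E1) (hH1 : MeasurableSet H1)
    (hE2 : MeasurableSet E2) (hH2 : MeasurableSet H2)
    (hE3 : MeasurableSet E3) (hH3 : MeasurableSet H3)
    (h1 : 0 < P H1) (h2 : 0 < P H2) (h3 : 0 < P H3) :
    x123 P E1 H1 E2 H2 E3 H3 ≤
      min (condProb P E1 H1) (min (condProb P E2 H2) (condProb P E3 H3)) := by
  have hU : MeasurableSet (H1 ∪ H2 ∪ H3) := (hH1.union hH2).union hH3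
  have hU0 : P (H1 ∪ H2 ∪ H3) ≠ 0 := fun hc =>
    h1.ne' (le_antisymm (le_trans (measure_mono
      (Set.subset_union_left.trans Set.subset_union_left)) hc.le) zero_le)
  have hD : 0 < (P (H1 ∪ H2 ∪ H3)).toReal := ENNReal.toReal_pos hU0 (measure_ne_top _ _)
  have hic : Integrable (fun ω => c3base P E1 H1 E2 H2 E3 H3 ω * ind (H1 ∪ H2 ∪ H3) ω) P :=
    integrable_c3base_mul_ind P hE1 hH1 hE2 hH2 hE3 hH3 h1 h2
  refine le_min ?_ (le_min ?_ ?_)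
  · rw [x123, div_le_iff₀ hD]
    calc ∫ ω, c3base P E1 H1 E2 H2 E3 H3 ω * ind (H1 ∪ H2 ∪ H3) ω ∂P
        ≤ ∫ ω, condEvent P E1 H1 ω * ind (H1 ∪ H2 ∪ H3) ω ∂P :=
          integral_mono hic (integrable_condEvent_mul_ind P hE1 hH1 hU)
            (c3base_le_cond1 P hE1 hH1 hE2 hH2 hE3 hH3 h1 h2 h3)
      _ = condProb P E1 H1 * (P (H1 ∪ H2 ∪ H3)).toReal :=
          integral_condEvent_mul_ind P hE1 hH1 hU h1.ne'
            (Set.subset_union_left.trans Set.subset_union_left)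
  · rw [x123, div_le_iff₀ hD]
    calc ∫ ω, c3base P E1 H1 E2 H2 E3 H3 ω * ind (H1 ∪ H2 ∪ H3) ω ∂P
        ≤ ∫ ω, condEvent P E2 H2 ω * ind (H1 ∪ H2 ∪ H3) ω ∂P :=
          integral_mono hic (integrable_condEvent_mul_ind P hE2 hH2 hU)
            (c3base_le_cond2 P hE1 hH1 hE2 hH2 hE3 hH3 h1 h2 h3)
      _ = condProb P E2 H2 * (P (H1 ∪ H2 ∪ H3)).toReal :=
          integral_condEvent_mul_ind P hE2 hH2 hU h2.ne'
            (Set.subset_union_right.trans Set.subset_union_left)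
  · rw [x123, div_le_iff₀ hD]
    calc ∫ ω, c3base P E1 H1 E2 H2 E3 H3 ω * ind (H1 ∪ H2 ∪ H3) ω ∂P
        ≤ ∫ ω, condEvent P E3 H3 ω * ind (H1 ∪ H2 ∪ H3) ω ∂P :=
          integral_mono hic (integrable_condEvent_mul_ind P hE3 hH3 hU)
            (c3base_le_cond3 P hE1 hH1 hE2 hH2 hE3 hH3 h1 h2 h3)
      _ = condProb P E3 H3 * (P (H1 ∪ H2 ∪ H3)).toReal :=
          integral_condEvent_mul_ind P hE3 hH3 hU h3.ne' Set.subset_union_right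

end
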